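/- (Saito's criterion for multiarrangements) Let (𝒜, m) be a multiarrangement with defining polynomial Q(𝒜,m) = Π_{H∈𝒜} α_H^{m(H)} and let θ₁,…,θ_ℓ ∈ D(𝒜,m) be homogeneous derivations. Then det(θᵢ(x_j)) ∈ S·Q(𝒜,m). Moreover θ₁,…,θ_ℓ form a basis of D(𝒜,m) if and only if they are S-independent and Σᵢ deg θᵢ = |m| := Σ_{H∈𝒜} m(H). -/

import Mathlib

open MvPolynomial Module

attribute [local instance] Classical.propDecidable

namespace ArrPaper

variable {K : Type*} [Field K] {ℓ m : ℕ}

/-- The polynomial coordinate ring `S = K[x₁,…,x_ℓ]`. -/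
abbrev S (K : Type*) [Field K] (ℓ : ℕ) := MvPolynomial (Fin ℓ) K

/-- A polynomial derivation of `S`, given by its values on the variables. -/
abbrev Deriv (K : Type*) [Field K] (ℓ : ℕ) := Fin ℓ → S K ℓ

/-- The linear form `∑ αᵢ xᵢ` as a polynomial. -/
noncomputable def lin (α : Fin ℓ → K) : S K ℓ := ∑ i, C (α i) * X i

/-- The value `θ(α)` of a derivation on a linear form `α`. -/
noncomputable def applyD (θ : Deriv K ℓ) (α : Fin ℓ → K) : S K ℓ := ∑ i, C (α i) * θ i

lemma applyD_add (θ η : Deriv K ℓ) (α : Fin ℓ → K) :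
    applyD (θ + η) α = applyD θ α + applyD η α := by
  simp [applyD, mul_add, Finset.sum_add_distrib]

lemma applyD_smul (f : S K ℓ) (θ : Deriv K ℓ) (α : Fin ℓ → K) :
    applyD (f • θ) α = f * applyD θ α := by
  simp only [applyD, Pi.smul_apply, smul_eq_mul, Finset.mul_sum]
  exact Finset.sum_congr rfl fun i _ => by ring

/-- The logarithmic derivation module `D(𝒜)` of an arrangement, where the
arrangement is specified by the finite set of its defining linear forms. -/
noncomputable def logDer (A : Finset (Fin ℓ → K)) : Submodule (S K ℓ) (Deriv K ℓ) where
  carrier := {θ | ∀ α ∈ A, lin α ∣ applyD θ α}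
  add_mem' := by
    intro a b ha hb α hα
    rw [applyD_add]
    exact dvd_add (ha α hα) (hb α hα)
  zero_mem' := by intro α hα; simp [applyD]
  smul_mem' := by
    intro f θ hθ β hβ
    rw [applyD_smul]
    exact (hθ β hβ).mul_left f

/-- The logarithmic derivation module `D(𝒜, m)` of a multiarrangement. -/
noncomputable def logDerM (A : Finset (Fin ℓ → K)) (mult : (Fin ℓ → K) → ℕ) :
    Submodule (S K ℓ) (Deriv K ℓ) where
  carrier := {θ | ∀ α ∈ A, (lin α) ^ (mult α) ∣ applyD θ α}
  add_mem' := by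
    intro a b ha hb α hα
    rw [applyD_add]
    exact dvd_add (ha α hα) (hb α hα)
  zero_mem' := by intro α hα; simp [applyD]
  smul_mem' := by
    intro f θ hθ β hβ
    rw [applyD_smul]
    exact (hθ β hβ).mul_left f

/-- The Euler derivation. -/
noncomputable def eulerD (K : Type*) [Field K] (ℓ : ℕ) : Deriv K ℓ := fun i => X i

/-- A derivation is homogeneous of degree `d` if all its coefficients are. -/
def IsHomog (θ : Deriv K ℓ) (d : ℕ) : Prop := ∀ i, (θ i).IsHomogeneous d

/-- A family is a (free) basis of a submodule of the derivation module. -/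
def IsBasisOf {ι : Type*} (θ : ι → Deriv K ℓ) (M : Submodule (S K ℓ) (Deriv K ℓ)) : Prop :=
  (∀ i, θ i ∈ M) ∧ LinearIndependent (S K ℓ) θ ∧ Submodule.span (S K ℓ) (Set.range θ) = M

/-- `𝒜` is free with exponents `d₁,…,d_ℓ`. -/
def IsFreeWithExp (A : Finset (Fin ℓ → K)) (d : Fin ℓ → ℕ) : Prop :=
  ∃ θ : Fin ℓ → Deriv K ℓ, IsBasisOf θ (logDer A) ∧ ∀ i, IsHomog (θ i) (d i)

/-- `(𝒜, m)` is free with exponents `d₁,…,d_ℓ`. -/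
def IsFreeWithExpM (A : Finset (Fin ℓ → K)) (mult : (Fin ℓ → K) → ℕ) (d : Fin ℓ → ℕ) : Prop :=
  ∃ θ : Fin ℓ → Deriv K ℓ, IsBasisOf θ (logDerM A mult) ∧ ∀ i, IsHomog (θ i) (d i)

/-- The hyperplane `ker α ⊆ Kˡ` attached to a linear form `α`. -/
noncomputable def hyp (α : Fin ℓ → K) : Submodule K (Fin ℓ → K) :=
  LinearMap.ker (∑ i, α i • LinearMap.proj i : (Fin ℓ → K) →ₗ[K] K)

/-- The restriction `𝒜^H = {H ∩ L : L ∈ 𝒜'}` of an arrangement `𝒜'` to the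
hyperplane `H = ker α_H`, as a finite set of subspaces. -/
noncomputable def restH (A' : Finset (Fin ℓ → K)) (αH : Fin ℓ → K) :
    Finset (Submodule K (Fin ℓ → K)) :=
  A'.image (fun β => hyp αH ⊓ hyp β)

/-- The restriction `𝒜^X = {X ∩ H : H ∈ 𝒜, X ⊄ H}` to a subspace `X`. -/
noncomputable def restArr (A : Finset (Fin ℓ → K)) (Xs : Submodule K (Fin ℓ → K)) :
    Finset (Submodule K (Fin ℓ → K)) :=
  (A.filter (fun β => ¬ Xs ≤ hyp β)).image (fun β => Xs ⊓ hyp β)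

/-- Codimension of a subspace of `Kˡ`. -/
noncomputable def codim (Xs : Submodule K (Fin ℓ → K)) : ℕ := ℓ - Module.finrank K Xs

/-- The intersection lattice `L(𝒜)`. -/
noncomputable def LSet (A : Finset (Fin ℓ → K)) : Finset (Submodule K (Fin ℓ → K)) :=
  A.powerset.image (fun b => b.inf hyp)

/-- Pullback (restriction) of polynomial functions along a linear map
`ι : Kᵐ → Kˡ`. -/
noncomputable def pullback (ι : (Fin m → K) →ₗ[K] (Fin ℓ → K)) : S K ℓ →ₐ[K] S K m :=
  aeval (fun j => ∑ i, C (ι (Pi.single i 1) j) * X i)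

/-- The (Euler) restriction of a derivation onto the subspace `im ι ≅ Kᵐ`,
computed using chosen linear forms `γ i` lifting the coordinates of `Kᵐ`. -/
noncomputable def restD (ι : (Fin m → K) →ₗ[K] (Fin ℓ → K)) (γ : Fin m → (Fin ℓ → K))
    (θ : Deriv K ℓ) : Deriv K m :=
  fun i => pullback ι (applyD θ (γ i))

/-- `γ` is a system of coordinate lifts for `ι : Kᵐ → Kˡ`. -/
def CoordLifts (ι : (Fin m → K) →ₗ[K] (Fin ℓ → K)) (γ : Fin m → (Fin ℓ → K)) : Prop :=
  ∀ i, pullback ι (lin (γ i)) = X i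

/-- `B` (a finite set of forms on `Kᵐ`) represents the restricted arrangement
`𝒜^X` via the embedding `ι : Kᵐ ≅ X ⊆ Kˡ`. -/
def Represents (B : Finset (Fin m → K)) (ι : (Fin m → K) →ₗ[K] (Fin ℓ → K))
    (A : Finset (Fin ℓ → K)) (Xs : Submodule K (Fin ℓ → K)) : Prop :=
  (∀ b ∈ B, b ≠ 0) ∧ B.image (fun b => (hyp b).map ι) = restArr A Xs ∧
    B.card = (restArr A Xs).card

/-- The restricted arrangement `𝒜^X` is free with exponents `e`. -/
def RestFree (A : Finset (Fin ℓ → K)) (Xs : Submodule K (Fin ℓ → K)) (m : ℕ)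
    (e : Fin m → ℕ) : Prop :=
  ∃ (φ : (Fin m → K) ≃ₗ[K] Xs) (B : Finset (Fin m → K)),
    Represents B (Xs.subtype ∘ₗ φ.toLinearMap) A Xs ∧ IsFreeWithExp B e

/-- The Ziegler multiplicity of a hyperplane `ker b ⊆ Kᵐ ≅ H` obtained by
restricting `𝒜` onto `H = ker α_H`. -/
noncomputable def zMult (A : Finset (Fin ℓ → K)) (αH : Fin ℓ → K)
    (ι : (Fin m → K) →ₗ[K] (Fin ℓ → K)) (b : Fin m → K) : ℕ :=
  ((A.erase αH).filter (fun β => hyp αH ⊓ hyp β = (hyp b).map ι)).card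

/-- `θ ↦ θ(α)` as an `S`-linear map. -/
noncomputable def applyDL (α : Fin ℓ → K) : Deriv K ℓ →ₗ[S K ℓ] S K ℓ where
  toFun θ := applyD θ α
  map_add' a b := applyD_add a b α
  map_smul' f θ := by simpa using applyD_smul f θ α

/-- `D_H(𝒜) = {θ ∈ D(𝒜) : θ(α_H) = 0}`. -/
noncomputable def DH (A : Finset (Fin ℓ → K)) (αH : Fin ℓ → K) :
    Submodule (S K ℓ) (Deriv K ℓ) :=
  logDer A ⊓ LinearMap.ker (applyDL αH)

end ArrPaper



namespace ArrAux
open ArrPaper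

variable {K : Type*} [Field K] {ℓ : ℕ}

lemma coeff_lin (α : Fin ℓ → K) (i : Fin ℓ) :
    coeff (Finsupp.single i 1) (lin α) = α i := by
  rw [lin, coeff_sum]
  rw [Finset.sum_eq_single i]
  · simp [coeff_C_mul, coeff_X]
  · intro j _ hji
    rw [coeff_C_mul, coeff_X', if_neg, mul_zero]
    exact fun h => hji (by
      have := Finsupp.single_left_injective (α := Fin ℓ) (one_ne_zero (α := ℕ)) h
      exact this)
  · simp

lemma lin_inj {α β : Fin ℓ → K} (h : lin α = lin β) : α = β := by
  funext i
  rw [← coeff_lin α i, ← coeff_lin β i, h]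

lemma lin_ne_zero {α : Fin ℓ → K} (hα : α ≠ 0) : lin α ≠ 0 := by
  intro h
  apply hα
  funext i
  have := coeff_lin α i
  rw [h] at this
  simpa using this.symm

lemma lin_smul (c : K) (α : Fin ℓ → K) : lin (c • α) = C c * lin α := by
  simp only [lin, Finset.mul_sum, Pi.smul_apply, smul_eq_mul, map_mul]
  exact Finset.sum_congr rfl fun i _ => by ring

lemma lin_isHomogeneous (α : Fin ℓ → K) : (lin α).IsHomogeneous 1 := by
  apply MvPolynomial.IsHomogeneous.sum
  intro i _
  simpa using (isHomogeneous_C (Fin ℓ) (α i)).mul (isHomogeneous_X K i)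

lemma prime_X_mv (j : Fin ℓ) : Prime (X j : S K ℓ) := by
  cases ℓ with
  | zero => exact absurd j.2 (by omega)
  | succ n =>
    rw [← MulEquiv.prime_iff ((renameEquiv K (Equiv.swap j 0)).trans (finSuccEquiv K n)).toMulEquiv]
    show Prime ((finSuccEquiv K n) ((renameEquiv K (Equiv.swap j 0)) (X j)))
    rw [renameEquiv_apply, rename_X, Equiv.swap_apply_left, finSuccEquiv_X_zero]
    exact Polynomial.prime_X


lemma algHom_lin (ψ : S K ℓ →ₐ[K] S K ℓ) (β : Fin ℓ → K) :
    ψ (lin β) = ∑ i, C (β i) * ψ (X i) := by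
  rw [lin, map_sum]
  refine Finset.sum_congr rfl fun i _ => ?_
  rw [map_mul]
  congr 1
  rw [← MvPolynomial.algebraMap_eq]
  exact ψ.commutes _

lemma sum_ite_lin (α : Fin ℓ → K) (j0 : Fin ℓ) (W : S K ℓ) :
    ∑ k, C (α k) * (if k = j0 then W else X k)
      = lin α + C (α j0) * (W - X j0) := by
  have h : ∀ k ∈ Finset.univ, C (α k) * (if k = j0 then W else X k)
      = C (α k) * X k + (if k = j0 then C (α j0) * (W - X j0) else 0) := by
    intro k _
    split_ifs with hk
    · subst hk; ring
    · ring
  rw [Finset.sum_congr rfl h, Finset.sum_add_distrib, Finset.sum_ite_eq']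
  simp [lin]

lemma prime_lin {α : Fin ℓ → K} (hα : α ≠ 0) : Prime (lin α) := by
  obtain ⟨j0, hj0⟩ : ∃ j, α j ≠ 0 := by
    by_contra h; push_neg at h; exact hα (funext h)
  have hC : (C (α j0) : S K ℓ) * C (α j0)⁻¹ = 1 := by
    rw [← C_mul, mul_inv_cancel₀ hj0, C_1]
  set G : S K ℓ := C (α j0)⁻¹ * (X j0 - (lin α - C (α j0) * X j0)) with hG
  set f : S K ℓ →ₐ[K] S K ℓ := aeval (fun i => if i = j0 then lin α else X i) with hf
  set g : S K ℓ →ₐ[K] S K ℓ := aeval (fun i => if i = j0 then G else X i) with hg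
  have hfX : ∀ i, f (X i) = if i = j0 then lin α else X i := fun i => aeval_X _ i
  have hgX : ∀ i, g (X i) = if i = j0 then G else X i := fun i => aeval_X _ i
  have hglin : g (lin α) = X j0 := by
    rw [algHom_lin]
    simp only [hgX]
    rw [sum_ite_lin, hG, mul_sub, ← mul_assoc, hC]
    ring
  have hflin : f (lin α) = lin α + C (α j0) * (lin α - X j0) := by
    rw [algHom_lin]
    simp only [hfX]
    rw [sum_ite_lin]
  have hgf : g.comp f = AlgHom.id K (S K ℓ) := by
    apply MvPolynomial.algHom_ext
    intro i
    rw [AlgHom.comp_apply, hfX, AlgHom.id_apply]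
    split_ifs with hi
    · subst hi; exact hglin
    · rw [hgX, if_neg hi]
  have hfg : f.comp g = AlgHom.id K (S K ℓ) := by
    apply MvPolynomial.algHom_ext
    intro i
    rw [AlgHom.comp_apply, hgX, AlgHom.id_apply]
    split_ifs with hi
    · rw [hi, hG, map_mul, map_sub, map_sub, map_mul]
      have hCf : f (C (α j0)⁻¹) = C (α j0)⁻¹ := by
        rw [← MvPolynomial.algebraMap_eq]; exact f.commutes _
      have hCf2 : f (C (α j0)) = C (α j0) := by
        rw [← MvPolynomial.algebraMap_eq]; exact f.commutes _
      rw [hCf, hCf2, hflin, hfX, if_pos rfl]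
      have expand : lin α - (lin α + C (α j0) * (lin α - X j0)
          - C (α j0) * lin α) = C (α j0) * X j0 := by ring
      rw [expand, ← mul_assoc, mul_comm (C (α j0)⁻¹) (C (α j0)), hC, one_mul]
    · rw [hfX, if_neg hi]
  have hp : Prime ((AlgEquiv.ofAlgHom f g hfg hgf).toMulEquiv (X j0)) :=
    (MulEquiv.prime_iff (AlgEquiv.ofAlgHom f g hfg hgf).toMulEquiv).mpr (prime_X_mv j0)
  have h2 : (AlgEquiv.ofAlgHom f g hfg hgf).toMulEquiv (X j0) = lin α := by
    show f (X j0) = lin α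
    rw [hfX, if_pos rfl]
  rwa [h2] at hp

lemma homog_factor {p q g : S K ℓ} {n D : ℕ} (hp : p.IsHomogeneous n)
    (hq : q.IsHomogeneous D) (hq0 : q ≠ 0) (heq : q = p * g) :
    g.IsHomogeneous (D - n) ∧ n + (D - n) = D := by
  have hp0 : p ≠ 0 := fun h => hq0 (by rw [heq, h, zero_mul])
  have hg0 : g ≠ 0 := fun h => hq0 (by rw [heq, h, mul_zero])
  have hdecomp : q = ∑ i ∈ Finset.range (g.totalDegree + 1),
      p * homogeneousComponent i g := by
    rw [← Finset.mul_sum, sum_homogeneousComponent, heq]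
  have happ := congrArg (homogeneousComponent D) hdecomp
  rw [homogeneousComponent_of_mem ((mem_homogeneousSubmodule _ _).mpr hq),
    if_pos rfl, map_sum] at happ
  have hterm : ∀ i ∈ Finset.range (g.totalDegree + 1),
      homogeneousComponent D (p * homogeneousComponent i g)
        = if D = n + i then p * homogeneousComponent i g else 0 := by
    intro i _
    exact homogeneousComponent_of_mem ((mem_homogeneousSubmodule _ _).mpr
      (hp.mul (homogeneousComponent_isHomogeneous i g)))
  rw [Finset.sum_congr rfl hterm] at happ
  by_cases hD : D < n
  · exfalso
    apply hq0
    rw [happ]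
    apply Finset.sum_eq_zero
    intro i _
    rw [if_neg (by omega)]
  · push_neg at hD
    set k := D - n with hk
    have hDnk : D = n + k := by omega
    have hterm2 : ∀ i ∈ Finset.range (g.totalDegree + 1),
        (if D = n + i then p * homogeneousComponent i g else 0)
          = if k = i then p * homogeneousComponent i g else 0 := by
      intro i _
      congr 1
      simp only [eq_iff_iff]
      omega
    rw [Finset.sum_congr rfl hterm2, Finset.sum_ite_eq] at happ
    by_cases hkr : k ∈ Finset.range (g.totalDegree + 1)
    · rw [if_pos hkr] at happ
      have hgk : g = homogeneousComponent k g := by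
        apply mul_left_cancel₀ hp0
        rw [← happ, heq]
      exact ⟨hgk ▸ homogeneousComponent_isHomogeneous k g, by omega⟩
    · exfalso
      apply hq0
      rw [happ, if_neg hkr]

lemma homog_deg_zero_eq_C {g : S K ℓ} (hg : g.IsHomogeneous 0) :
    g = C (coeff 0 g) := by
  have h := homogeneousComponent_of_mem (m := 0) ((mem_homogeneousSubmodule _ _).mpr hg)
  rw [if_pos rfl] at h
  nth_rewrite 1 [← h]
  rw [homogeneousComponent_zero]

lemma lin_dvd_lin {α β : Fin ℓ → K} (hα : α ≠ 0) (hβ : β ≠ 0)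
    (h : lin α ∣ lin β) : ∃ c : K, β = c • α := by
  obtain ⟨g, hg⟩ := h
  obtain ⟨hgh, -⟩ := homog_factor (lin_isHomogeneous α) (lin_isHomogeneous β)
    (lin_ne_zero hβ) hg
  rw [Nat.sub_self] at hgh
  have hgC := homog_deg_zero_eq_C hgh
  refine ⟨coeff 0 g, lin_inj ?_⟩
  rw [hg, hgC, lin_smul, mul_comm]
  simp

lemma relPrime_lin {α β : Fin ℓ → K} (hα : α ≠ 0) (hβ : β ≠ 0)
    (hne : ∀ c : K, β ≠ c • α) : IsRelPrime (lin α) (lin β) := by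
  intro x hxα hxβ
  by_contra hxu
  obtain ⟨t, ht⟩ := hxα
  rcases (prime_lin hα).irreducible.isUnit_or_isUnit ht with h | h
  · exact hxu h
  · obtain ⟨u, rfl⟩ := h
    have hx : lin α ∣ x := ⟨↑u⁻¹, by rw [ht, mul_assoc, Units.mul_inv, mul_one]⟩
    obtain ⟨c, hc⟩ := lin_dvd_lin hα hβ (hx.trans hxβ)
    exact hne c hc

lemma dvd_det_of_dvd_applyD {p : S K ℓ} {α : Fin ℓ → K} (hα : α ≠ 0)
    (μ : Fin ℓ → Deriv K ℓ) (h : ∀ i, p ∣ applyD (μ i) α) :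
    p ∣ (Matrix.of fun i j => μ i j).det := by
  obtain ⟨j0, hj0⟩ : ∃ j, α j ≠ 0 := by
    by_contra hc; push_neg at hc; exact hα (funext hc)
  set M := Matrix.of (fun i j => μ i j) with hM
  choose w hw using h
  have key := Matrix.det_updateCol_sum M j0 (fun j => C (α j))
  have hcol : (fun k => ∑ i, (C (α i) : S K ℓ) • M k i) = fun k => p * w k := by
    funext k
    simp only [smul_eq_mul]
    rw [← hw k, applyD]
    rfl
  rw [hcol] at key
  have hcol2 : (fun k => p * w k) = p • w := by funext k; simp
  rw [hcol2, Matrix.det_updateCol_smul] at key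
  obtain ⟨u, hu⟩ := (isUnit_iff_ne_zero.mpr hj0).map (C : K →+* S K ℓ)
  have : M.det = ↑u⁻¹ * (p * (M.updateCol j0 w).det) := by
    rw [key, smul_eq_mul, ← hu, ← mul_assoc, Units.inv_mul, one_mul]
  rw [this]
  exact Dvd.dvd.mul_left (Dvd.intro _ rfl) _

lemma Q_dvd_det (A : Finset (Fin ℓ → K)) (hA0 : ∀ α ∈ A, α ≠ 0)
    (hnp : ∀ α ∈ A, ∀ β ∈ A, α ≠ β → ∀ c : K, α ≠ c • β)
    (mult : (Fin ℓ → K) → ℕ) (μ : Fin ℓ → Deriv K ℓ)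
    (hμ : ∀ k, μ k ∈ logDerM A mult) :
    (∏ α ∈ A, lin α ^ mult α) ∣ (Matrix.of fun i j => μ i j).det := by
  have main : ∀ s : Finset (Fin ℓ → K), s ⊆ A →
      (∏ α ∈ s, lin α ^ mult α) ∣ (Matrix.of fun i j => μ i j).det := by
    intro s
    induction s using Finset.induction_on with
    | empty => intro _; simpa using one_dvd _
    | @insert a s' ha ih =>
      intro hsub
      have haA : a ∈ A := hsub (Finset.mem_insert_self _ _)
      have hs'A : s' ⊆ A := fun x hx => hsub (Finset.mem_insert_of_mem hx)
      rw [Finset.prod_insert ha]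
      refine IsRelPrime.mul_dvd ?_ ?_ (ih hs'A)
      · refine IsRelPrime.pow_left (IsRelPrime.prod_right fun b hb => ?_)
        refine IsRelPrime.pow_right (relPrime_lin (hA0 a haA) (hA0 b (hs'A hb)) ?_)
        intro c
        exact hnp b (hs'A hb) a haA (fun hba => ha (hba ▸ hb)) c
      · exact dvd_det_of_dvd_applyD (hA0 a haA) μ (fun i => hμ i a haA)
  exact main A le_rfl

lemma mem_logDerM_iff {A : Finset (Fin ℓ → K)} {mult : (Fin ℓ → K) → ℕ}
    {θ : Deriv K ℓ} :
    θ ∈ logDerM A mult ↔ ∀ α ∈ A, (lin α) ^ (mult α) ∣ applyD θ α := Iff.rfl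

lemma det_isHomog (μ : Fin ℓ → Deriv K ℓ) (d : Fin ℓ → ℕ)
    (hhom : ∀ i, IsHomog (μ i) (d i)) :
    ((Matrix.of fun i j => μ i j).det).IsHomogeneous (∑ i, d i) := by
  rw [Matrix.det_apply]
  apply MvPolynomial.IsHomogeneous.sum
  intro σ _
  have hprod : (∏ i, (Matrix.of fun i j => μ i j) (σ i) i).IsHomogeneous (∑ i, d i) := by
    rw [← Equiv.sum_comp σ d]
    exact MvPolynomial.IsHomogeneous.prod _ _ _ (fun i _ => hhom (σ i) i)
  rcases Int.units_eq_one_or (Equiv.Perm.sign σ) with h | h <;> rw [h]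
  · simpa using hprod
  · have : ((-1 : ℤˣ) • (∏ i, (Matrix.of fun i j => μ i j) (σ i) i))
        = -(∏ i, (Matrix.of fun i j => μ i j) (σ i) i) := by
      simp [Units.smul_def]
    rw [this]
    exact (mem_homogeneousSubmodule _ _).mp
      (neg_mem ((mem_homogeneousSubmodule _ _).mpr hprod))

lemma Q_isHomog (A : Finset (Fin ℓ → K)) (mult : (Fin ℓ → K) → ℕ) :
    (∏ α ∈ A, lin α ^ mult α).IsHomogeneous (∑ α ∈ A, mult α) := by
  apply MvPolynomial.IsHomogeneous.prod
  intro α _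
  simpa using (lin_isHomogeneous α).pow (mult α)

lemma Q_ne_zero {A : Finset (Fin ℓ → K)} (hA0 : ∀ α ∈ A, α ≠ 0)
    (mult : (Fin ℓ → K) → ℕ) : (∏ α ∈ A, lin α ^ mult α) ≠ 0 :=
  Finset.prod_ne_zero_iff.mpr fun α hα => pow_ne_zero _ (lin_ne_zero (hA0 α hα))

lemma det_ne_zero_of_li (μ : Fin ℓ → Deriv K ℓ)
    (h : LinearIndependent (S K ℓ) μ) : (Matrix.of fun i j => μ i j).det ≠ 0 := by
  intro hdet
  obtain ⟨v, hv0, hv⟩ : ∃ v, v ≠ 0 ∧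
      Matrix.mulVec (Matrix.of fun i j => μ i j).transpose v = 0 :=
    Matrix.exists_mulVec_eq_zero_iff.mpr (by rwa [Matrix.det_transpose])
  apply hv0
  have hz : ∑ i, v i • μ i = 0 := by
    funext j
    have hj := congrFun hv j
    simp only [Matrix.mulVec, dotProduct, Matrix.transpose_apply,
      Matrix.of_apply, Pi.zero_apply] at hj
    rw [Finset.sum_apply]
    simp only [Pi.smul_apply, smul_eq_mul, Pi.zero_apply]
    rw [← hj]
    exact Finset.sum_congr rfl fun i _ => mul_comm _ _
  have := Fintype.linearIndependent_iff.mp h v hz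
  funext i
  exact this i

lemma applyD_single (α : Fin ℓ → K) (j : Fin ℓ) :
    applyD (Pi.single j (1 : S K ℓ)) α = C (α j) := by
  rw [applyD, Finset.sum_eq_single j]
  · simp
  · intro i _ hij
    rw [Pi.single_eq_of_ne hij, mul_zero]
  · simp

lemma Qe_mem (A : Finset (Fin ℓ → K)) (mult : (Fin ℓ → K) → ℕ) (j : Fin ℓ) :
    ((∏ α ∈ A, lin α ^ mult α) • (Pi.single j (1 : S K ℓ) : Deriv K ℓ))
      ∈ logDerM A mult := by
  rw [mem_logDerM_iff]
  intro α hα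
  rw [applyD_smul, applyD_single]
  exact Dvd.dvd.mul_right (Finset.dvd_prod_of_mem _ hα) _

lemma exists_eta (A : Finset (Fin ℓ → K)) (hA0 : ∀ α ∈ A, α ≠ 0)
    (mult : (Fin ℓ → K) → ℕ) {α : Fin ℓ → K} (hαA : α ∈ A) :
    ∃ μ : Fin ℓ → Deriv K ℓ, (∀ k, μ k ∈ logDerM A mult) ∧
      (Matrix.of fun i j => μ i j).det
        = (∏ β ∈ A.erase α, lin β ^ mult β) ^ ℓ * lin α ^ mult α := by
  obtain ⟨j0, hj0⟩ : ∃ j, α j ≠ 0 := by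
    by_contra hc; push_neg at hc; exact hA0 α hαA (funext hc)
  set P : S K ℓ := ∏ β ∈ A.erase α, lin β ^ mult β with hP
  set v : Fin ℓ → S K ℓ :=
    fun k => if k = j0 then lin α ^ mult α else C (-(α k / α j0)) with hv
  set E : Matrix (Fin ℓ) (Fin ℓ) (S K ℓ) :=
    (1 : Matrix (Fin ℓ) (Fin ℓ) (S K ℓ)).updateCol j0 v with hE
  have hEapp : ∀ k i, E k i = if i = j0 then v k
      else (1 : Matrix (Fin ℓ) (Fin ℓ) (S K ℓ)) k i := by
    intro k i
    rw [hE, Matrix.updateCol_apply]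
  have hsum : ∀ k, (∑ i, C (α i) * E k i)
      = if k = j0 then C (α j0) * lin α ^ mult α else 0 := by
    intro k
    by_cases hk : k = j0
    · subst hk
      rw [if_pos rfl, Finset.sum_eq_single k]
      · rw [hEapp, if_pos rfl]
        simp [hv]
      · intro i _ hik
        rw [hEapp, if_neg ?_, Matrix.one_apply_ne (Ne.symm hik), mul_zero]
        exact hik
      · simp
    · rw [if_neg hk]
      have hsub : ∑ i, C (α i) * E k i = ∑ i ∈ {j0, k}, C (α i) * E k i := by
        symm
        apply Finset.sum_subset (Finset.subset_univ _)
        intro i _ hi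
        simp only [Finset.mem_insert, Finset.mem_singleton, not_or] at hi
        rw [hEapp, if_neg hi.1, Matrix.one_apply_ne ?_, mul_zero]
        exact fun hki => hi.2 hki.symm
      rw [hsub, Finset.sum_pair (Ne.symm hk)]
      rw [hEapp, if_pos rfl, hEapp, if_neg hk, Matrix.one_apply_eq]
      rw [hv]
      simp only [if_pos rfl, if_neg hk]
      rw [mul_one, ← C_mul, ← C_add]
      rw [show α j0 * -(α k / α j0) + α k = 0 by field_simp; ring]
      exact C_0
  refine ⟨fun k => (fun j => P * E k j), ?_, ?_⟩
  · intro k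
    rw [mem_logDerM_iff]
    intro β hβ
    have happ : applyD (fun j => P * E k j) β = P * ∑ i, C (β i) * E k i := by
      rw [applyD, Finset.mul_sum]
      exact Finset.sum_congr rfl fun i _ => by ring
    by_cases hβα : β = α
    · subst hβα
      rw [happ, hsum]
      by_cases hk : k = j0
      · rw [if_pos hk]
        exact Dvd.dvd.mul_left (Dvd.dvd.mul_left dvd_rfl _) _
      · rw [if_neg hk, mul_zero]
        exact dvd_zero _
    · rw [happ]
      exact Dvd.dvd.mul_right
        (Finset.dvd_prod_of_mem _ (Finset.mem_erase.mpr ⟨hβα, hβ⟩)) _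
  · have hmat : (Matrix.of fun k j => ((fun j => P * E k j) : Deriv K ℓ) j) = P • E := by
      ext k j
      simp [Matrix.smul_apply, smul_eq_mul]
    rw [hmat, Matrix.det_smul, Fintype.card_fin]
    congr 1
    have : E.det = Matrix.cramer (1 : Matrix (Fin ℓ) (Fin ℓ) (S K ℓ)) v j0 := by
      rw [Matrix.cramer_apply, hE]
    rw [this, Matrix.cramer_one]
    show v j0 = lin α ^ mult α
    simp [hv]

lemma det_dvd_of_rows_in_span (θ μ : Fin ℓ → Deriv K ℓ)
    (h : ∀ k, μ k ∈ Submodule.span (S K ℓ) (Set.range θ)) :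
    (Matrix.of fun i j => θ i j).det ∣ (Matrix.of fun i j => μ i j).det := by
  choose N hN using fun k => (Submodule.mem_span_range_iff_exists_fun _).mp (h k)
  have hmat : (Matrix.of fun k i => N k i) * (Matrix.of fun i j => θ i j)
      = Matrix.of fun k j => μ k j := by
    refine Matrix.ext fun k j => ?_
    rw [Matrix.mul_apply]
    have hk := congrFun (hN k) j
    rw [Finset.sum_apply] at hk
    simpa [Matrix.of_apply, smul_eq_mul] using hk
  exact Dvd.intro_left _ (by rw [← hmat, Matrix.det_mul])

end ArrAux

open ArrPaper in
/-- Saito's criterion for multiarrangements. -/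
theorem stmt11 {K : Type*} [Field K] {ℓ : ℕ} (A : Finset (Fin ℓ → K))
    (hA0 : ∀ α ∈ A, α ≠ 0)
    (hnp : ∀ α ∈ A, ∀ β ∈ A, α ≠ β → ∀ c : K, α ≠ c • β)
    (mult : (Fin ℓ → K) → ℕ) (hm : ∀ α ∈ A, 0 < mult α)
    (θ : Fin ℓ → Deriv K ℓ) (hθ : ∀ i, θ i ∈ logDerM A mult)
    (d : Fin ℓ → ℕ) (hhom : ∀ i, IsHomog (θ i) (d i)) :
    (∏ α ∈ A, lin α ^ mult α) ∣ Matrix.det (Matrix.of fun i j => θ i j) ∧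
    (IsBasisOf θ (logDerM A mult) ↔
      LinearIndependent (S K ℓ) θ ∧ ∑ i, d i = ∑ α ∈ A, mult α) := by
  classical
  have hQdvd : (∏ α ∈ A, lin α ^ mult α) ∣ (Matrix.of fun i j => θ i j).det :=
    ArrAux.Q_dvd_det A hA0 hnp mult θ hθ
  set Q : S K ℓ := ∏ α ∈ A, lin α ^ mult α with hQdef
  set M : Matrix (Fin ℓ) (Fin ℓ) (S K ℓ) := Matrix.of fun i j => θ i j with hMdef
  refine ⟨hQdvd, ?_⟩
  have hQ0 : Q ≠ 0 := ArrAux.Q_ne_zero hA0 mult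
  have hQhom := ArrAux.Q_isHomog A mult
  have hdethom := ArrAux.det_isHomog θ d hhom
  constructor
  · rintro ⟨hmem, hind, hspan⟩
    refine ⟨hind, ?_⟩
    have hdet0 : M.det ≠ 0 := ArrAux.det_ne_zero_of_li θ hind
    obtain ⟨g, hgdet⟩ := hQdvd
    obtain ⟨hghom, hsum⟩ := ArrAux.homog_factor hQhom hdethom hdet0 hgdet
    have hdetQl : M.det ∣ Q ^ ℓ := by
      have h1 := ArrAux.det_dvd_of_rows_in_span θ
        (fun j => Q • (Pi.single j (1 : S K ℓ) : Deriv K ℓ))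
        (fun j => by rw [hspan]; exact ArrAux.Qe_mem A mult j)
      have h2 : (Matrix.of fun i j =>
          (Q • (Pi.single i (1 : S K ℓ) : Deriv K ℓ)) j)
          = Q • (1 : Matrix (Fin ℓ) (Fin ℓ) (S K ℓ)) := by
        ext i j
        simp [Pi.single_apply, Matrix.one_apply, eq_comm]
      rw [h2, Matrix.det_smul, Fintype.card_fin, Matrix.det_one, mul_one] at h1
      exact h1
    have hnog : ∀ α ∈ A, ¬ lin α ∣ g := by
      intro α hαA hdvd
      obtain ⟨μ, hμmem, hμdet⟩ := ArrAux.exists_eta A hA0 mult hαA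
      have hdvd2 : M.det ∣ (∏ β ∈ A.erase α, lin β ^ mult β) ^ ℓ
          * lin α ^ mult α := by
        rw [← hμdet]
        exact ArrAux.det_dvd_of_rows_in_span θ μ
          (fun k => by rw [hspan]; exact hμmem k)
      set P := ∏ β ∈ A.erase α, lin β ^ mult β with hPdef
      have hQsplit : Q = lin α ^ mult α * P := by
        rw [hQdef, hPdef]
        exact (Finset.mul_prod_erase A (fun β => lin β ^ mult β) hαA).symm
      obtain ⟨j0, hj00⟩ : ∃ j, α j ≠ 0 := by
        by_contra hc; push_neg at hc; exact hA0 α hαA (funext hc)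
      have hl : 0 < ℓ := j0.pos
      have hP0 : P ≠ 0 := Finset.prod_ne_zero_iff.mpr fun β hβ =>
        pow_ne_zero _ (ArrAux.lin_ne_zero (hA0 β (Finset.mem_of_mem_erase hβ)))
      have hbase0 : lin α ^ mult α * P ≠ 0 :=
        mul_ne_zero (pow_ne_zero _ (ArrAux.lin_ne_zero (hA0 α hαA))) hP0
      have hre : P ^ ℓ * lin α ^ mult α = (lin α ^ mult α * P) * P ^ (ℓ - 1) := by
        rw [← pow_sub_one_mul hl.ne' P]
        ring
      have hgP : g ∣ P ^ (ℓ - 1) := by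
        have hmd : (lin α ^ mult α * P) * g ∣ (lin α ^ mult α * P) * P ^ (ℓ - 1) := by
          rw [← hre, ← hQsplit, ← hgdet]
          exact hdvd2
        exact (mul_dvd_mul_iff_left hbase0).mp hmd
      have hlinP2 : lin α ∣ P :=
        (ArrAux.prime_lin (hA0 α hαA)).dvd_of_dvd_pow (hdvd.trans hgP)
      obtain ⟨β, hβer, hβdvd⟩ :=
        (ArrAux.prime_lin (hA0 α hαA)).exists_mem_finset_dvd hlinP2
      have hβA : β ∈ A := Finset.mem_of_mem_erase hβer
      have hlinβ : lin α ∣ lin β :=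
        (ArrAux.prime_lin (hA0 α hαA)).dvd_of_dvd_pow hβdvd
      obtain ⟨c, hc⟩ := ArrAux.lin_dvd_lin (hA0 α hαA) (hA0 β hβA) hlinβ
      exact hnp β hβA α hαA (Finset.ne_of_mem_erase hβer) c hc
    by_cases hk : (∑ i, d i - ∑ α ∈ A, mult α) = 0
    · omega
    · exfalso
      have hg0 : g ≠ 0 := fun h => hdet0 (by rw [hgdet, h, mul_zero])
      have hnu : ¬ IsUnit g := by
        intro hu
        have h1 : IsUnit (constantCoeff g) := hu.map constantCoeff
        have hdeg : (0 : Fin ℓ →₀ ℕ).degree = 0 := by simp [Finsupp.degree]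
        have h2 : coeff 0 g = 0 :=
          hghom.coeff_eq_zero (by rw [hdeg]; exact fun hh => hk hh.symm)
        rw [constantCoeff_eq] at h1
        rw [h2] at h1
        exact not_isUnit_zero h1
      obtain ⟨r, hrirr, hrg⟩ := WfDvdMonoid.exists_irreducible_factor hnu hg0
      have hrprime : Prime r := UniqueFactorizationMonoid.irreducible_iff_prime.mp hrirr
      have hgdvdet : g ∣ M.det := ⟨Q, by rw [hgdet]; ring⟩
      have hrQ : r ∣ Q := hrprime.dvd_of_dvd_pow ((hrg.trans hgdvdet).trans hdetQl)
      obtain ⟨β, hβA, hrβ⟩ := hrprime.exists_mem_finset_dvd hrQ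
      have hrlin : r ∣ lin β := hrprime.dvd_of_dvd_pow hrβ
      obtain ⟨t, ht⟩ := hrlin
      rcases (ArrAux.prime_lin (hA0 β hβA)).irreducible.isUnit_or_isUnit ht with h | h
      · exact hrprime.not_unit h
      · obtain ⟨u, rfl⟩ := h
        refine hnog β hβA (Dvd.dvd.trans ⟨↑u⁻¹, ?_⟩ hrg)
        rw [ht, mul_assoc, Units.mul_inv, mul_one]
  · rintro ⟨hind, hsum⟩
    have hdet0 : M.det ≠ 0 := ArrAux.det_ne_zero_of_li θ hind
    obtain ⟨g, hgdet⟩ := hQdvd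
    obtain ⟨hghom, -⟩ := ArrAux.homog_factor hQhom hdethom hdet0 hgdet
    rw [hsum, Nat.sub_self] at hghom
    have hgC := ArrAux.homog_deg_zero_eq_C hghom
    have hc0 : coeff 0 g ≠ 0 := by
      intro h
      apply hdet0
      rw [hgdet, hgC, h, C_0, mul_zero]
    have hCc : (C (coeff 0 g) : S K ℓ) * C (coeff 0 g)⁻¹ = 1 := by
      rw [← C_mul, mul_inv_cancel₀ hc0, C_1]
    have hQC0 : Q * C (coeff 0 g) ≠ 0 := by
      apply mul_ne_zero hQ0
      intro h
      exact hc0 (by rw [← C_inj (σ := Fin ℓ) (R := K), h, C_0])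
    refine ⟨hθ, hind, ?_⟩
    apply le_antisymm
    · rw [Submodule.span_le]
      rintro x ⟨i, rfl⟩
      exact hθ i
    · intro η hη
      have hQi : ∀ i : Fin ℓ, Q ∣ (M.updateRow i η).det := by
        intro i
        have hupd : M.updateRow i η
            = Matrix.of fun k j => (Function.update θ i η) k j := by
          ext k j
          rw [Matrix.updateRow_apply, Matrix.of_apply, Function.update_apply]
          split_ifs <;> rfl
        rw [hupd]
        apply ArrAux.Q_dvd_det A hA0 hnp mult
        intro k
        by_cases hk : k = i
        · subst hk; rw [Function.update_self]; exact hη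
        · rw [Function.update_of_ne hk]; exact hθ k
      choose h hh using hQi
      refine (Submodule.mem_span_range_iff_exists_fun _).mpr ⟨fun i => C (coeff 0 g)⁻¹ * h i, ?_⟩
      funext j
      have hcr := congrFun (Matrix.mulVec_cramer M.transpose η) j
      rw [Matrix.det_transpose] at hcr
      simp only [Matrix.mulVec, dotProduct, Matrix.transpose_apply,
        Pi.smul_apply, smul_eq_mul] at hcr
      have hcr2 : ∑ i, θ i j * (Q * h i) = Q * C (coeff 0 g) * η j := by
        calc ∑ i, θ i j * (Q * h i)
            = ∑ i, M i j * Matrix.cramer M.transpose η i := by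
              refine Finset.sum_congr rfl fun i _ => ?_
              rw [Matrix.cramer_transpose_apply, hh i]
              rfl
          _ = M.det * η j := hcr
          _ = Q * C (coeff 0 g) * η j := by rw [hgdet, ← hgC]
      rw [Finset.sum_apply]
      simp only [Pi.smul_apply, smul_eq_mul]
      refine mul_left_cancel₀ hQC0 ?_
      calc (Q * C (coeff 0 g)) * (∑ i, (C (coeff 0 g)⁻¹ * h i) * θ i j)
          = (C (coeff 0 g) * C (coeff 0 g)⁻¹) * (∑ i, θ i j * (Q * h i)) := by
            rw [Finset.mul_sum, Finset.mul_sum]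
            exact Finset.sum_congr rfl fun i _ => by ring
        _ = Q * C (coeff 0 g) * η j := by rw [hCc, one_mul, hcr2]
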